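/- arXiv:1212.2602 — 5 statements merged into one kernel-verified Lean document; each statement's English description precedes it below -/
import Mathlib

section
/- Let (X,μ) be a probability space and T a measure-preserving transformation such that T^k is ergodic for some k ≥ 1. If ν is a T×T-invariant probability measure on X×X with both marginals equal to μ and ν is invariant under Id×T^k (i.e., ν(A × B) = ν(A × T^{-k}B) for all measurable A, B), then ν = μ × μ. -/
open MeasureTheory Filter
open scoped ENNReal NNReal symmDiff

/-- A finite invariant measure absolutely continuous with respect to an ergodic
probability measure is a scalar multiple of it. -/
theorem aux_invariant_ac_ergodic {X : Type*} [MeasurableSpace X]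
    {μ σ : Measure X} [IsProbabilityMeasure μ] [IsFiniteMeasure σ]
    {f : X → X} (hErg : Ergodic f μ) (hac : σ ≪ μ)
    (hinv : Measure.map f σ = σ) : σ = σ Set.univ • μ := by
  have hf : Measurable f := hErg.measurable
  set g : X → ℝ≥0∞ := σ.rnDeriv μ with hg
  have hgm : Measurable g := Measure.measurable_rnDeriv σ μ
  have hwd : μ.withDensity g = σ := Measure.withDensity_rnDeriv_eq σ μ hac
  have hset : ∀ s : Set X, MeasurableSet s → ∫⁻ x in s, g x ∂μ = σ s := by
    intro s hs
    rw [← hwd, withDensity_apply _ hs]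
  -- level sets are a.e. invariant
  have key : ∀ c : ℝ≥0∞, c ≠ ⊤ → f ⁻¹' {x | c < g x} =ᵐ[μ] {x | c < g x} := by
    intro c hc
    set s : Set X := {x | c < g x} with hs_def
    have hsm : MeasurableSet s := measurableSet_lt measurable_const hgm
    have htm : MeasurableSet (f ⁻¹' s) := hsm.preimage hf
    have hμ_eq : μ (f ⁻¹' s) = μ s := hErg.toMeasurePreserving.measure_preimage hsm.nullMeasurableSet
    have hσ_eq : σ (f ⁻¹' s) = σ s := by
      conv_rhs => rw [← hinv]
      rw [Measure.map_apply hf hsm]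
    set A : Set X := s \ f ⁻¹' s with hA
    set B : Set X := f ⁻¹' s \ s with hB
    have hAm : MeasurableSet A := hsm.diff htm
    have hBm : MeasurableSet B := htm.diff hsm
    -- μ A = μ B and σ A = σ B
    have hμAB : μ A = μ B := by
      have h1 : μ (s ∩ f ⁻¹' s) + μ A = μ s := measure_inter_add_diff s htm
      have h2 : μ (f ⁻¹' s ∩ s) + μ B = μ (f ⁻¹' s) := measure_inter_add_diff _ hsm
      rw [Set.inter_comm] at h2
      rw [hμ_eq, ← h1] at h2
      exact ((ENNReal.add_right_inj (measure_ne_top μ _)).1 h2).symm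
    have hσAB : σ A = σ B := by
      have h1 : σ (s ∩ f ⁻¹' s) + σ A = σ s := measure_inter_add_diff s htm
      have h2 : σ (f ⁻¹' s ∩ s) + σ B = σ (f ⁻¹' s) := measure_inter_add_diff _ hsm
      rw [Set.inter_comm] at h2
      rw [hσ_eq, ← h1] at h2
      exact ((ENNReal.add_right_inj (measure_ne_top σ _)).1 h2).symm
    -- σ B ≤ c * μ B
    have hσB : σ B ≤ c * μ B := by
      rw [← hset B hBm]
      calc ∫⁻ x in B, g x ∂μ ≤ ∫⁻ _ in B, c ∂μ := by
            refine setLIntegral_mono measurable_const (fun x hx => ?_)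
            have : x ∉ s := hx.2
            simpa [hs_def, not_lt] using this
        _ = c * μ B := by rw [setLIntegral_const]
    -- conclude μ A = 0
    have hμA : μ A = 0 := by
      by_contra hA0
      set An : ℕ → Set X := fun n => A ∩ {x | c + (n : ℝ≥0∞)⁻¹ ≤ g x} with hAn
      have hAnm : ∀ n, MeasurableSet (An n) :=
        fun n => hAm.inter (measurableSet_le measurable_const hgm)
      have hcover : A ⊆ ⋃ n, An n := by
        intro x hx
        have hxs : c < g x := hx.1
        rcases eq_or_ne (g x) ⊤ with hgx | hgx
        · exact Set.mem_iUnion.2 ⟨0, hx, by simp [hgx]⟩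
        · have hpos : (0 : ℝ≥0∞) < g x - c := tsub_pos_of_lt hxs
          obtain ⟨n, hn⟩ := ENNReal.exists_inv_nat_lt hpos.ne'
          refine Set.mem_iUnion.2 ⟨n, hx, ?_⟩
          have : c + (n : ℝ≥0∞)⁻¹ ≤ c + (g x - c) := add_le_add le_rfl hn.le
          simpa [add_tsub_cancel_of_le hxs.le] using this
      obtain ⟨n, hn⟩ : ∃ n, μ (An n) ≠ 0 := by
        by_contra h
        push_neg at h
        exact hA0 (measure_mono_null hcover (measure_iUnion_null h))
      -- σ A ≥ c * μ A + n⁻¹ * μ (An n)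
      have hsplit : A = An n ∪ (A \ An n) := by
        rw [Set.union_diff_self, Set.union_eq_self_of_subset_left Set.inter_subset_left]
      have hσA_ge : c * μ A + (n : ℝ≥0∞)⁻¹ * μ (An n) ≤ σ A := by
        rw [← hset A hAm]
        have hdis : Disjoint (An n) (A \ An n) := disjoint_sdiff_self_right
        calc c * μ A + (n : ℝ≥0∞)⁻¹ * μ (An n)
            = (c + (n : ℝ≥0∞)⁻¹) * μ (An n) + c * μ (A \ An n) := by
              have : μ A = μ (An n) + μ (A \ An n) := by
                rw [← measure_inter_add_diff A (hAnm n),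
                  Set.inter_eq_self_of_subset_right Set.inter_subset_left]
              rw [this]; ring
          _ ≤ ∫⁻ x in An n, g x ∂μ + ∫⁻ x in A \ An n, g x ∂μ := by
              gcongr
              · rw [← setLIntegral_const]
                exact setLIntegral_mono hgm (fun x hx => hx.2)
              · rw [← setLIntegral_const]
                exact setLIntegral_mono hgm (fun x hx => (hx.1.1 : c < g x).le)
          _ = ∫⁻ x in An n ∪ (A \ An n), g x ∂μ :=
              (lintegral_union (hAm.diff (hAnm n)) hdis).symm
          _ = ∫⁻ x in A, g x ∂μ := by rw [← hsplit]
      have hlt : c * μ A + (n : ℝ≥0∞)⁻¹ * μ (An n) ≤ c * μ A := by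
        calc c * μ A + (n : ℝ≥0∞)⁻¹ * μ (An n) ≤ σ A := hσA_ge
          _ = σ B := hσAB
          _ ≤ c * μ B := hσB
          _ = c * μ A := by rw [hμAB]
      have hfin : c * μ A ≠ ⊤ := ENNReal.mul_ne_top hc (measure_ne_top μ A)
      have : (n : ℝ≥0∞)⁻¹ * μ (An n) = 0 := by
        have h0 : c * μ A + (n : ℝ≥0∞)⁻¹ * μ (An n) ≤ c * μ A + 0 := by simpa using hlt
        exact le_zero_iff.1 ((ENNReal.add_le_add_iff_left hfin).1 h0)
      rcases mul_eq_zero.1 this with h | h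
      · exact (ENNReal.inv_ne_zero.2 (ENNReal.natCast_ne_top n)) h
      · exact hn h
    have hμB : μ B = 0 := hμAB ▸ hμA
    -- symmetric difference is null
    have hsymm : μ ((f ⁻¹' s) ∆ s) = 0 := by
      rw [Set.symmDiff_def]
      exact measure_union_null hμB hμA
    exact (MeasureTheory.measure_symmDiff_eq_zero_iff).1 hsymm
  -- g ∘ f =ᵐ[μ] g
  have hcomp : g ∘ f =ᵐ[μ] g := by
    have hq : ∀ᵐ x ∂μ, ∀ q : ℚ,
        ((Real.toNNReal q : ℝ≥0∞) < g (f x) ↔ (Real.toNNReal q : ℝ≥0∞) < g x) := by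
      rw [MeasureTheory.ae_all_iff]
      intro q
      have := key (Real.toNNReal q : ℝ≥0∞) ENNReal.coe_ne_top
      filter_upwards [Filter.eventuallyEq_set.1 this] with x hx
      simpa using hx
    filter_upwards [hq] with x hx
    refine le_antisymm ?_ ?_
    · by_contra h
      push_neg at h
      obtain ⟨q, _, h1, h2⟩ := ENNReal.lt_iff_exists_rat_btwn.1 h
      exact absurd ((hx q).1 h2) (not_lt.2 h1.le)
    · by_contra h
      push_neg at h
      obtain ⟨q, _, h1, h2⟩ := ENNReal.lt_iff_exists_rat_btwn.1 h
      exact absurd ((hx q).2 h2) (not_lt.2 h1.le)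
  obtain ⟨c, hc⟩ := hErg.ae_eq_const_of_ae_eq_comp₀ hgm.nullMeasurable hcomp
  have hσc : σ = c • μ := by
    rw [← hwd, withDensity_congr_ae hc]
    exact MeasureTheory.withDensity_const (μ := μ) c
  have huniv : σ Set.univ = c := by
    simp [hσc]
  rw [huniv]
  exact hσc

/-- If `T` is measure preserving, `T^k` is ergodic for some `k ≥ 1`, and `ν` is a
self-joining of `T` (a `T×T`-invariant probability measure on `X × X` with both marginals `μ`)
which is moreover invariant under `Id × T^k`, then `ν = μ × μ`. -/
theorem selfJoining_invariant_under_id_prod_ergodic_power_eq_prod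
    {X : Type*} [MeasurableSpace X] (μ : Measure X) [IsProbabilityMeasure μ]
    (T : X → X) (hT : MeasurePreserving T μ μ)
    (k : ℕ) (hk : 1 ≤ k) (hErg : Ergodic (T^[k]) μ)
    (ν : Measure (X × X)) [IsProbabilityMeasure ν]
    (hinv : Measure.map (Prod.map T T) ν = ν)
    (hfst : ν.fst = μ) (hsnd : ν.snd = μ)
    (hkinv : Measure.map (Prod.map id (T^[k])) ν = ν) :
    ν = μ.prod μ := by
  have hf : Measurable (T^[k]) := hT.measurable.iterate k
  have hmTT : Measurable (Prod.map T T) := hT.measurable.prodMap hT.measurable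
  have hmid : Measurable (Prod.map id (T^[k]) : X × X → X × X) :=
    measurable_id.prodMap hf
  have hmfid : Measurable (Prod.map (T^[k]) id : X × X → X × X) :=
    hf.prodMap measurable_id
  -- ν is invariant under T^k × T^k
  have hTTk : Measure.map (Prod.map (T^[k]) (T^[k])) ν = ν := by
    have hmp : MeasurePreserving (Prod.map T T) ν ν := ⟨hmTT, hinv⟩
    have := (hmp.iterate k).map_eq
    rwa [Prod.map_iterate] at this
  -- hence invariant under T^k × id
  have hfidinv : Measure.map (Prod.map (T^[k]) id) ν = ν := by
    conv_lhs => rw [← hkinv]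
    rw [Measure.map_map hmfid hmid]
    have : (Prod.map (T^[k]) id) ∘ (Prod.map id (T^[k])) = Prod.map (T^[k]) (T^[k]) := by
      ext p <;> simp [Prod.map]
    rw [this, hTTk]
  refine (Measure.prod_eq (μ := μ) (ν := μ) (fun s t hs ht => ?_)).symm
  -- the measure A ↦ ν (A ×ˢ t)
  set σ : Measure X := (ν.restrict (Set.univ ×ˢ t)).fst with hσ
  have hσapp : ∀ A : Set X, MeasurableSet A → σ A = ν (A ×ˢ t) := by
    intro A hA
    rw [hσ, Measure.fst_apply hA, Measure.restrict_apply (measurable_fst hA)]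
    congr 1
    ext p
    simp [Set.mem_prod]
  have hσuniv : σ Set.univ = μ t := by
    rw [hσapp _ MeasurableSet.univ, ← hsnd, Measure.snd_apply ht]
    congr 1
    ext p
    simp
  have hac : σ ≪ μ := by
    refine Measure.AbsolutelyContinuous.mk (fun A hA hA0 => ?_)
    rw [hσapp A hA]
    refine measure_mono_null (Set.prod_mono_right (Set.subset_univ t)) ?_
    have : ν (A ×ˢ Set.univ) = ν.fst A := by
      rw [Measure.fst_apply hA]
      congr 1
      ext p
      simp
    rw [this, hfst]
    exact hA0
  haveI hσfin : IsFiniteMeasure σ := by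
    constructor
    rw [hσapp _ MeasurableSet.univ]
    exact lt_of_le_of_lt (measure_mono (Set.subset_univ _)) (measure_lt_top ν _)
  have hσinv : Measure.map (T^[k]) σ = σ := by
    ext A hA
    rw [Measure.map_apply hf hA, hσapp _ (hA.preimage hf), hσapp A hA]
    have : (T^[k] ⁻¹' A) ×ˢ t = (Prod.map (T^[k]) id) ⁻¹' (A ×ˢ t) := by
      ext p
      simp [Prod.map]
    rw [this, ← Measure.map_apply hmfid (hA.prod ht), hfidinv]
  have hconst := aux_invariant_ac_ergodic hErg hac hσinv
  calc ν (s ×ˢ t) = σ s := (hσapp s hs).symm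
    _ = σ Set.univ * μ s := by rw [hconst]; simp [mul_comm]
    _ = μ s * μ t := by rw [hσuniv, mul_comm]
end

section
/- Let T be an ergodic measure-preserving transformation of a probability space (X,μ), viewed as a unitary operator on L²(X,μ), and let P be a bounded operator on L²(X,μ) satisfying T^m P = P for some m ≠ 0 with T^m ergodic. If P is Markov (positivity-preserving, P1 = 1, P*1 = 1), then P = Θ, the orthogonal projection onto constant functions. -/
open MeasureTheory Filter

variable {X : Type*} [MeasurableSpace X]

/-- The constant function `1` in `L²(X, μ)`. -/
noncomputable def oneL2 (μ : Measure X) [IsProbabilityMeasure μ] : Lp ℝ 2 μ :=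
  Lp.const 2 μ (1 : ℝ)

/-- A Markov operator on `L²(X, μ)`: positivity preserving, `P 1 = 1` and `P* 1 = 1`. -/
def IsMarkovOp (μ : Measure X) [IsProbabilityMeasure μ]
    (P : Lp ℝ 2 μ →L[ℝ] Lp ℝ 2 μ) : Prop :=
  (∀ f : Lp ℝ 2 μ, 0 ≤ᵐ[μ] (f : X → ℝ) → 0 ≤ᵐ[μ] (P f : X → ℝ)) ∧
    P (oneL2 μ) = oneL2 μ ∧ ContinuousLinearMap.adjoint P (oneL2 μ) = oneL2 μ

lemma inner_oneL2_right (μ : Measure X) [IsProbabilityMeasure μ] (f : Lp ℝ 2 μ) :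
    (inner ℝ f (oneL2 μ) : ℝ) = ∫ x, f x ∂μ := by
  rw [L2.inner_def]
  have h := Lp.coeFn_const (α := X) 2 μ (1 : ℝ)
  refine integral_congr_ae ?_
  filter_upwards [h] with x hx
  simp [oneL2, RCLike.inner_apply, hx]

/-- if `P` is a Markov operator on `L²(X, μ)` with `T^m P = P` for some `m ≠ 0`
such that `T^m` is ergodic (`V` below denotes the Koopman operator of `T^m`, i.e. `T^m` as an
operator), then `P = Θ`, the orthogonal projection onto the constants:
`⟨P f, g⟩ = (∫ f)(∫ g)` for all `f, g`. -/
theorem markov_fixed_by_ergodic_power_eq_proj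
    (μ : Measure X) [IsProbabilityMeasure μ]
    (T : X ≃ X) (hT : MeasurePreserving T μ μ) (hTsymm : MeasurePreserving T.symm μ μ)
    (hErgT : Ergodic ⇑T μ)
    (m : ℤ) (hm : m ≠ 0) (hErg : Ergodic ⇑(T ^ m) μ)
    (V : Lp ℝ 2 μ →L[ℝ] Lp ℝ 2 μ)
    (hV : ∀ f : Lp ℝ 2 μ, (V f : X → ℝ) =ᵐ[μ] fun x => f (⇑(T ^ (-m)) x))
    (P : Lp ℝ 2 μ →L[ℝ] Lp ℝ 2 μ) (hP : IsMarkovOp μ P)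
    (hVP : V ∘L P = P) :
    ∀ f g : Lp ℝ 2 μ,
      (inner ℝ (P f) g : ℝ) = (∫ x, f x ∂μ) * ∫ x, g x ∂μ := by
  intro f g
  -- P f is invariant under T^(-m) a.e., hence under T^m a.e.
  have hfix : (P f : X → ℝ) =ᵐ[μ] fun x => (P f) (⇑(T ^ (-m)) x) := by
    have := hV (P f)
    have h2 : V (P f) = P f := by
      have := congrArg (fun A => A f) hVP
      simpa using this
    rw [h2] at this
    exact this
  have hmp : MeasurePreserving ⇑(T ^ m) μ μ := hErg.1
  have hid : ∀ x, (T ^ (-m)) ((T ^ m) x) = x := fun x => by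
    rw [← Equiv.Perm.mul_apply, ← zpow_add, neg_add_cancel, zpow_zero, Equiv.Perm.one_apply]
  have hcomp : (P f : X → ℝ) ∘ ⇑(T ^ m) =ᵐ[μ] (P f : X → ℝ) := by
    have h := hmp.quasiMeasurePreserving.ae_eq_comp hfix
    refine h.trans (Filter.Eventually.of_forall fun x => ?_)
    simp only [Function.comp_apply, hid x]
  obtain ⟨c, hc⟩ := hErg.ae_eq_const_of_ae_eq_comp_ae (Lp.aestronglyMeasurable (P f)) hcomp
  -- c = ∫ f
  have hc_val : c = ∫ x, f x ∂μ := by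
    have h1 : (inner ℝ (P f) (oneL2 μ) : ℝ) = ∫ x, f x ∂μ := by
      rw [← ContinuousLinearMap.adjoint_inner_right, hP.2.2, inner_oneL2_right]
    have h2 : (inner ℝ (P f) (oneL2 μ) : ℝ) = c := by
      rw [inner_oneL2_right]
      rw [integral_congr_ae hc]
      simp
    rw [← h1, h2]
  -- conclude
  rw [L2.inner_def]
  have : (fun x => (inner ℝ ((P f : X → ℝ) x) ((g : X → ℝ) x) : ℝ)) =ᵐ[μ] fun x => c * g x := by
    filter_upwards [hc] with x hx
    simp [RCLike.inner_apply, hx, Function.const, mul_comm]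
  rw [integral_congr_ae this, integral_const_mul, hc_val]
end

section
/- Let T be a measure-preserving transformation of a probability space (X,μ) such that T^k is ergodic. Suppose ν is a self-joining of T and ν is a convex combination ν = Σ_{i=0}^{r-1} a_i (Id × T^i)η of the measures (Id × T^i)η for some probability measure η on X×X, with at least two coefficients a_n and a_{n+k} (k > 0) nonzero. If ν is ergodic for T×T, then ν = (Id × T^k)ν. -/
open MeasureTheory Filter Set
open scoped NNReal ENNReal symmDiff

/-- An invariant probability measure absolutely continuous w.r.t. an ergodic
probability measure equals it. -/
lemma invariant_absCont_ergodic_eq {α : Type*} [MeasurableSpace α] {S : α → α}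
    {ν ν₁ : Measure α} [IsProbabilityMeasure ν] [IsProbabilityMeasure ν₁]
    (hνerg : Ergodic S ν) (hν₁ : Measure.map S ν₁ = ν₁) (hac : ν₁ ≪ ν) : ν₁ = ν := by
  have hS : Measurable S := hνerg.toMeasurePreserving.measurable
  set f := ν₁.rnDeriv ν with hfdef
  have hf : Measurable f := Measure.measurable_rnDeriv _ _
  have hwd : ν.withDensity f = ν₁ := Measure.withDensity_rnDeriv_eq _ _ hac
  have hsl : ∀ s : Set α, MeasurableSet s → ν₁ s = ∫⁻ x in s, f x ∂ν := by
    intro s hs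
    rw [← hwd, withDensity_apply _ hs]
  set E : Set α := {x | f x < 1} with hEdef
  have hE : MeasurableSet E := measurableSet_lt hf measurable_const
  set A : Set α := E \ S ⁻¹' E with hAdef
  set B : Set α := (S ⁻¹' E) \ E with hBdef
  have hSE : MeasurableSet (S ⁻¹' E) := hS hE
  have hA : MeasurableSet A := hE.diff hSE
  have hB : MeasurableSet B := hSE.diff hE
  -- pull-back identities
  have hνpre : ν (S ⁻¹' E) = ν E :=
    hνerg.toMeasurePreserving.measure_preimage hE.nullMeasurableSet
  have hν₁pre : ν₁ (S ⁻¹' E) = ν₁ E := by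
    conv_rhs => rw [← hν₁]
    rw [Measure.map_apply hS hE]
  -- splitting
  have split : ∀ (π : Measure α) [IsFiniteMeasure π],
      π (S ⁻¹' E) = π E → π A = π B := by
    intro π _ hπ
    have h1 : π (E ∩ S ⁻¹' E) + π A = π E := measure_inter_add_diff E hSE
    have h2 : π (S ⁻¹' E ∩ E) + π B = π (S ⁻¹' E) := measure_inter_add_diff _ hE
    rw [Set.inter_comm] at h2
    have := h1.trans (hπ.symm.trans h2.symm)
    exact (ENNReal.add_right_inj (measure_ne_top π _)).mp this
  have hνAB : ν A = ν B := split ν hνpre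
  have hν₁AB : ν₁ A = ν₁ B := split ν₁ hν₁pre
  -- ν₁ A ≤ ν A since f < 1 on A
  have hle1 : ν₁ A ≤ ν A := by
    rw [hsl A hA, ← setLIntegral_one A]
    exact setLIntegral_mono measurable_const fun x hx => le_of_lt hx.1
  -- ν B ≤ ν₁ B since f ≥ 1 on B
  have hle2 : ν B ≤ ν₁ B := by
    rw [hsl B hB, ← setLIntegral_one B]
    exact setLIntegral_mono hf fun x hx => not_lt.mp hx.2
  have heq : ν₁ A = ν A := le_antisymm hle1 (by
    calc ν A = ν B := hνAB
    _ ≤ ν₁ B := hle2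
    _ = ν₁ A := hν₁AB.symm)
  -- conclude ν A = 0
  have hνA : ν A = 0 := by
    by_contra hpos
    have hae : f =ᵐ[ν.restrict A] (fun _ => 1) := by
      apply ae_eq_of_ae_le_of_lintegral_le
      · exact (ae_restrict_iff' hA).mpr (ae_of_all _ fun x hx => le_of_lt hx.1)
      · have : ∫⁻ x in A, f x ∂ν = ν₁ A := (hsl A hA).symm
        rw [this]; exact measure_ne_top _ _
      · exact aemeasurable_const
      · rw [lintegral_one, Measure.restrict_apply_univ, ← heq, hsl A hA]
    have : ν.restrict A {x | f x ≠ 1} = 0 := by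
      exact ae_iff.mp hae
    have hsub : A ⊆ {x | f x ≠ 1} := fun x hx => ne_of_lt hx.1
    have : ν.restrict A A = 0 := le_antisymm (le_trans (measure_mono hsub) this.le) zero_le
    rw [Measure.restrict_apply_self] at this
    exact hpos this
  have hνB : ν B = 0 := hνAB ▸ hνA
  -- E is a.e. invariant
  have haeinv : S ⁻¹' E =ᵐ[ν] E := by
    rw [Filter.eventuallyEq_set]
    have : ν ((S ⁻¹' E) ∆ E) = 0 := by
      rw [Set.symmDiff_def, measure_union_null_iff]
      exact ⟨hνB, hνA⟩
    have := measure_symmDiff_eq_zero_iff.mp this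
    exact this.mem_iff
  rcases hνerg.quasiErgodic.ae_empty_or_univ₀ hE.nullMeasurableSet haeinv with h0 | h1
  · -- ν E = 0, so 1 ≤ f a.e.
    have hE0 : ν E = 0 := ae_eq_empty.mp h0
    have hge : (fun _ : α => (1 : ℝ≥0∞)) ≤ᵐ[ν] f := by
      rw [Filter.EventuallyLE]
      filter_upwards [measure_eq_zero_iff_ae_notMem.mp hE0] with x hx
      exact not_lt.mp hx
    have h1f : (fun _ : α => (1 : ℝ≥0∞)) =ᵐ[ν] f := by
      apply ae_eq_of_ae_le_of_lintegral_le hge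
      · simp
      · exact hf.aemeasurable
      · have : ∫⁻ x, f x ∂ν = ν₁ univ := by
          rw [hsl univ MeasurableSet.univ, setLIntegral_univ]
        simp [this]
    rw [← hwd, withDensity_congr_ae h1f.symm]
    simp
  · -- ν E = 1, f < 1 a.e., contradiction
    exfalso
    have hE1 : ∀ᵐ x ∂ν, f x < 1 := by
      filter_upwards [(Filter.eventuallyEq_set.mp h1)] with x hx
      exact hx.mpr (Set.mem_univ x)
    have hle : f ≤ᵐ[ν] (fun _ => (1 : ℝ≥0∞)) := hE1.mono fun x hx => le_of_lt hx
    have h1f : f =ᵐ[ν] (fun _ => (1 : ℝ≥0∞)) := by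
      apply ae_eq_of_ae_le_of_lintegral_le hle
      · have : ∫⁻ x, f x ∂ν = ν₁ univ := by
          rw [hsl univ MeasurableSet.univ, setLIntegral_univ]
        simp [this]
      · exact aemeasurable_const
      · have : ∫⁻ x, f x ∂ν = ν₁ univ := by
          rw [hsl univ MeasurableSet.univ, setLIntegral_univ]
        simp [this]
    have : ∃ x, f x < 1 ∧ f x = 1 := (hE1.and h1f).exists
    obtain ⟨x, hx1, hx2⟩ := this
    exact absurd hx2 (ne_of_lt hx1)


/-- If `T^k` is ergodic, `ν` is a self-joining of `T` which is an ergodic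
(for `T × T`) convex combination `ν = ∑_{i<r} a_i (Id × T^i) η` of the pushforwards of a
probability measure `η` on `X × X` (each a self-joining of `T`), with two coefficients
`a_n ≠ 0` and `a_{n+k} ≠ 0` (`k > 0`), then `ν = (Id × T^k) ν`. -/
theorem ergodic_convex_combination_selfJoining_marginal_invariance
    {X : Type*} [MeasurableSpace X] (μ : Measure X) [IsProbabilityMeasure μ]
    (T : X → X) (hT : MeasurePreserving T μ μ)
    (k : ℕ) (hk : 0 < k) (hErgk : Ergodic (T^[k]) μ)
    (η : Measure (X × X)) [IsProbabilityMeasure η]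
    (hηinv : Measure.map (Prod.map T T) η = η)
    (hηfst : η.fst = μ) (hηsnd : η.snd = μ)
    (ν : Measure (X × X)) [IsProbabilityMeasure ν]
    (hνinv : Measure.map (Prod.map T T) ν = ν)
    (hνfst : ν.fst = μ) (hνsnd : ν.snd = μ)
    (r : ℕ) (a : ℕ → ℝ≥0) (hsum : ∑ i ∈ Finset.range r, a i = 1)
    (n : ℕ) (hnk : n + k < r) (han : a n ≠ 0) (hank : a (n + k) ≠ 0)
    (hcomb : ν = ∑ i ∈ Finset.range r,
      (a i : ℝ≥0∞) • Measure.map (Prod.map id (T^[i])) η)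
    (hνerg : Ergodic (Prod.map T T) ν) :
    ν = Measure.map (Prod.map id (T^[k])) ν := by
  have hTm : Measurable T := hT.measurable
  have hTT : Measurable (Prod.map T T) := hTm.prodMap hTm
  have hmi : ∀ i : ℕ, Measurable (Prod.map (id : X → X) (T^[i])) :=
    fun i => measurable_id.prodMap (hTm.iterate i)
  set m : ℕ → Measure (X × X) := fun i => Measure.map (Prod.map id (T^[i])) η with hmdef
  have hprob : ∀ i, IsProbabilityMeasure (m i) :=
    fun i => Measure.isProbabilityMeasure_map (hmi i).aemeasurable
  -- each m i is T × T invariant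
  have hinv : ∀ i, Measure.map (Prod.map T T) (m i) = m i := by
    intro i
    have hcommfun : Prod.map T T ∘ Prod.map (id : X → X) (T^[i])
        = Prod.map (id : X → X) (T^[i]) ∘ Prod.map T T := by
      funext p
      obtain ⟨x, y⟩ := p
      simp only [Function.comp_apply, Prod.map, id_eq]
      rw [← Function.iterate_succ_apply' T i, Function.iterate_succ_apply T i]
    rw [hmdef]
    simp only
    rw [Measure.map_map hTT (hmi i), hcommfun, ← Measure.map_map (hmi i) hTT, hηinv]
  -- absolute continuity of m i w.r.t. ν for nonzero coefficients
  have hac : ∀ i ∈ Finset.range r, a i ≠ 0 → m i ≪ ν := by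
    intro i hi hai
    intro s hs0
    rw [hcomb, Measure.finset_sum_apply] at hs0
    have := (Finset.sum_eq_zero_iff.mp hs0) i hi
    rw [Measure.smul_apply, smul_eq_mul, mul_eq_zero] at this
    rcases this with h | h
    · exact absurd h (ENNReal.coe_ne_zero.mpr hai)
    · exact h
  have key : ∀ i ∈ Finset.range r, a i ≠ 0 → m i = ν := by
    intro i hi hai
    haveI := hprob i
    exact invariant_absCont_ergodic_eq hνerg (hinv i) (hac i hi hai)
  have hn : m n = ν := key n (Finset.mem_range.mpr (lt_of_le_of_lt (Nat.le_add_right n k) hnk)) han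
  have hnk' : m (n + k) = ν := key (n + k) (Finset.mem_range.mpr hnk) hank
  -- m (n+k) = map (id × T^k) (m n)
  have hdecomp : m (n + k) = Measure.map (Prod.map id (T^[k])) (m n) := by
    rw [hmdef]
    simp only
    rw [Measure.map_map (hmi k) (hmi n)]
    congr 1
    funext p
    obtain ⟨x, y⟩ := p
    simp only [Function.comp_apply, Prod.map, id_eq]
    rw [← Function.iterate_add_apply, Nat.add_comm k n]
  rw [← hn, ← hdecomp, hnk']
  exact hn
end

section
/- Let T be the Koopman operator of an ergodic measure-preserving transformation on L²(X,μ) and let 0 < a < 1. Then the powers P^n of the Markov operator P = aI + (1-a)T converge to Θ in the weak operator topology as n → ∞, where Θ is the orthogonal projection onto constants, provided T is weakly mixing. -/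
open MeasureTheory Filter

namespace CCAux

open Finset

variable {a b : ℝ}

/-- Binomial weight `C(n,k) b^k a^(n-k)`. -/
noncomputable def w (a b : ℝ) (n k : ℕ) : ℝ := (n.choose k : ℝ) * b ^ k * a ^ (n - k)

/-- Shifted weight. -/
noncomputable def v (a b : ℝ) (n k : ℕ) : ℝ := if k = 0 then 0 else w a b n (k - 1)

/-- Difference of consecutive weights. -/
noncomputable def d (a b : ℝ) (n k : ℕ) : ℝ := w a b n k - v a b n k

/-- Peak (mode) index of the binomial distribution. -/
noncomputable def m (b : ℝ) (n : ℕ) : ℕ := ⌊b * (n + 1)⌋₊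

/-- Sum of squared weights. -/
noncomputable def s (a b : ℝ) (n : ℕ) : ℝ := ∑ k ∈ range (n + 1), (w a b n k) ^ 2

lemma w_def (a b : ℝ) (n k : ℕ) : w a b n k = (n.choose k : ℝ) * b ^ k * a ^ (n - k) := rfl

lemma w_zero_zero (a b : ℝ) : w a b 0 0 = 1 := by simp [w]

lemma v_zero (n : ℕ) : v a b n 0 = 0 := by simp [v]

lemma v_succ (n k : ℕ) : v a b n (k + 1) = w a b n k := by simp [v]

lemma w_nonneg (ha : 0 ≤ a) (hb : 0 ≤ b) (n k : ℕ) : 0 ≤ w a b n k := by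
  unfold w; positivity

lemma w_succ_self (n : ℕ) : w a b n (n + 1) = 0 := by
  simp [w, Nat.choose_eq_zero_of_lt (Nat.lt_succ_self n)]

lemma w_of_lt {n k : ℕ} (h : n < k) : w a b n k = 0 := by
  simp [w, Nat.choose_eq_zero_of_lt h]



lemma pascal (n k : ℕ) : w a b (n + 1) k = a * w a b n k + b * v a b n k := by
  cases k with
  | zero => simp [w, v]; ring
  | succ j =>
    rw [v_succ]
    rcases lt_trichotomy j n with hj | hj | hj
    · have h1 : (n + 1).choose (j + 1) = n.choose j + n.choose (j + 1) := Nat.choose_succ_succ n j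
      have h2 : n + 1 - (j + 1) = n - j := by omega
      have h3 : n - j = (n - (j + 1)) + 1 := by omega
      rw [w, h1, h2, Nat.cast_add]
      rw [w, w, h3]
      ring
    · subst hj
      rw [show w a b j (j + 1) = 0 from w_of_lt (by omega)]
      have h1 : (j + 1).choose (j + 1) = 1 := Nat.choose_self _
      have h2 : j.choose j = 1 := Nat.choose_self _
      rw [w, w, h1, h2, show j + 1 - (j + 1) = 0 by omega, show j - j = 0 by omega]
      simp [pow_succ]; ring
    · rw [show w a b n (j + 1) = 0 from w_of_lt (by omega),
        show w a b n j = 0 from w_of_lt (by omega),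
        show w a b (n + 1) (j + 1) = 0 from w_of_lt (by omega)]
      ring

lemma ratio_id {n k : ℕ} (hk : k < n) :
    w a b n (k + 1) * (a * (k + 1)) = w a b n k * (b * ((n : ℝ) - k)) := by
  have hc : ((n.choose (k + 1) : ℕ) : ℝ) * (k + 1) = (n.choose k : ℝ) * ((n : ℝ) - k) := by
    have := Nat.choose_succ_right_eq n k
    have hcast : ((n.choose (k + 1) * (k + 1) : ℕ) : ℝ) = ((n.choose k * (n - k) : ℕ) : ℝ) := by
      exact_mod_cast congrArg (Nat.cast (R := ℝ)) this
    push_cast [Nat.cast_sub hk.le] at hcast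
    push_cast
    linarith [hcast]
  have h2 : n - (k + 1) + 1 = n - k := by omega
  rw [w, w, ← h2]
  calc (n.choose (k+1) : ℝ) * b ^ (k+1) * a ^ (n - (k+1)) * (a * (k+1))
      = ((n.choose (k + 1) : ℝ) * (k + 1)) * b ^ (k+1) * (a ^ (n - (k+1)) * a) := by ring
    _ = ((n.choose k : ℝ) * ((n:ℝ) - k)) * b ^ (k+1) * a ^ (n - (k+1) + 1) := by
        rw [hc, pow_succ]; ring
    _ = (n.choose k : ℝ) * b ^ k * a ^ (n - (k+1) + 1) * (b * ((n:ℝ) - k)) := by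
        rw [pow_succ]; ring


section Steps

variable (ha : 0 < a) (hb : 0 < b) (hab : a + b = 1)
include ha hb hab

lemma stepA {n k : ℕ} (h : k + 1 ≤ m b n) : w a b n k ≤ w a b n (k + 1) := by
  have hble : (m b n : ℝ) ≤ b * (n + 1) := Nat.floor_le (by positivity)
  have hk1 : ((k : ℝ) + 1) ≤ b * (n + 1) := by
    have : ((k + 1 : ℕ) : ℝ) ≤ (m b n : ℝ) := by exact_mod_cast h
    push_cast at this; linarith
  have hkn : k < n := by
    have : b * (n + 1) < (n : ℝ) + 1 := by nlinarith [Nat.cast_nonneg (α := ℝ) n]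
    have : ((k : ℝ) + 1) < (n : ℝ) + 1 := lt_of_le_of_lt hk1 this
    exact_mod_cast (by push_cast at this ⊢; linarith : ((k : ℝ)) < (n : ℝ))
  have key : a * ((k : ℝ) + 1) ≤ b * ((n : ℝ) - k) := by nlinarith
  have hid := ratio_id (a := a) (b := b) hkn
  have hpos : 0 < a * ((k : ℝ) + 1) := by positivity
  have hwnn := w_nonneg ha.le hb.le (a := a) (b := b) n k
  -- w n k * (a*(k+1)) ≤ w n k * (b*(n-k)) = w n (k+1) * (a*(k+1))
  have : w a b n k * (a * ((k : ℝ) + 1)) ≤ w a b n (k + 1) * (a * ((k : ℝ) + 1)) := by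
    rw [hid]
    exact mul_le_mul_of_nonneg_left key hwnn
  have := le_of_mul_le_mul_right (by linarith [this] :
    w a b n k * (a * ((k : ℝ) + 1)) ≤ w a b n (k + 1) * (a * ((k : ℝ) + 1))) hpos
  exact this

lemma stepB {n k : ℕ} (h : m b n ≤ k) : w a b n (k + 1) ≤ w a b n k := by
  rcases lt_or_ge k n with hkn | hkn
  · have hflt : b * (n + 1) < (m b n : ℝ) + 1 := Nat.lt_floor_add_one _
    have hk1 : b * ((n : ℝ) + 1) < (k : ℝ) + 1 := by
      have : ((m b n : ℕ) : ℝ) ≤ (k : ℝ) := by exact_mod_cast h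
      linarith
    have key : b * ((n : ℝ) - k) ≤ a * ((k : ℝ) + 1) := by nlinarith
    have hid := ratio_id (a := a) (b := b) hkn
    have hpos : 0 < a * ((k : ℝ) + 1) := by positivity
    have hwnn := w_nonneg ha.le hb.le (a := a) (b := b) n k
    have : w a b n (k + 1) * (a * ((k : ℝ) + 1)) ≤ w a b n k * (a * ((k : ℝ) + 1)) := by
      rw [hid]
      exact mul_le_mul_of_nonneg_left key hwnn
    exact le_of_mul_le_mul_right this hpos
  · rw [w_of_lt (by omega : n < k + 1)]
    exact w_nonneg ha.le hb.le n k

lemma m_le_n (n : ℕ) : m b n ≤ n := by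
  have h1 : (m b n : ℝ) ≤ b * (n + 1) := Nat.floor_le (by positivity)
  have h2 : b * ((n : ℝ) + 1) < (n : ℝ) + 1 := by nlinarith [Nat.cast_nonneg (α := ℝ) n]
  have : (m b n : ℝ) < (n : ℝ) + 1 := lt_of_le_of_lt h1 h2
  exact_mod_cast Nat.lt_succ_iff.mp (by exact_mod_cast this)

lemma le_peak_of_le {n k : ℕ} (hk : k ≤ m b n) : w a b n k ≤ w a b n (m b n) := by
  have H : ∀ j : ℕ, ∀ k : ℕ, m b n = k + j → w a b n k ≤ w a b n (m b n) := by
    intro j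
    induction j with
    | zero => intro k hj; rw [hj]; exact le_refl _
    | succ i ih =>
      intro k hj
      have h1 : k + 1 ≤ m b n := by omega
      calc w a b n k ≤ w a b n (k + 1) := stepA ha hb hab h1
        _ ≤ w a b n (m b n) := ih (k + 1) (by omega)
  exact H (m b n - k) k (by omega)

lemma le_peak_of_ge {n k : ℕ} (hk : m b n ≤ k) : w a b n k ≤ w a b n (m b n) := by
  obtain ⟨j, rfl⟩ : ∃ j, m b n + j = k := ⟨k - m b n, by omega⟩
  clear hk
  induction j with
  | zero => simp
  | succ i ih =>
    have : m b n + (i + 1) = (m b n + i) + 1 := by omega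
    rw [this]
    exact le_trans (stepB ha hb hab (by omega)) ih

lemma le_peak {n : ℕ} (k : ℕ) : w a b n k ≤ w a b n (m b n) := by
  rcases le_total k (m b n) with h | h
  · exact le_peak_of_le ha hb hab h
  · exact le_peak_of_ge ha hb hab h


lemma sum_w (n : ℕ) : ∑ k ∈ range (n + 1), w a b n k = 1 := by
  have h := add_pow b a n
  rw [show b + a = 1 by linarith, one_pow] at h
  have : ∑ k ∈ range (n + 1), w a b n k
      = ∑ k ∈ range (n + 1), b ^ k * a ^ (n - k) * (n.choose k : ℝ) := by
    refine Finset.sum_congr rfl fun k _ => ?_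
    rw [w_def]; ring
  rw [this, ← h]

lemma s_le_peak (n : ℕ) : s a b n ≤ w a b n (m b n) := by
  have : s a b n ≤ ∑ k ∈ range (n + 1), w a b n (m b n) * w a b n k := by
    refine Finset.sum_le_sum fun k _ => ?_
    have h1 := le_peak ha hb hab (a := a) (n := n) k
    have h2 := w_nonneg ha.le hb.le (a := a) (b := b) n k
    calc (w a b n k) ^ 2 = w a b n k * w a b n k := sq (w a b n k) ▸ by ring
      _ ≤ w a b n (m b n) * w a b n k := mul_le_mul_of_nonneg_right h1 h2
  rw [← Finset.mul_sum, sum_w ha hb hab, mul_one] at this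
  exact this

-- ∑_{k ∈ range (n+2)} |d k| = 2 * w n (m n)
lemma sum_abs_d (n : ℕ) :
    ∑ k ∈ range (n + 2), |d a b n k| = 2 * w a b n (m b n) := by
  have hsplit : ∑ k ∈ range (n + 2), |d a b n k|
      = (∑ k ∈ range (n + 1), |d a b n (k + 1)|) + |d a b n 0| :=
    Finset.sum_range_succ' _ (n + 1)
  have hd0 : |d a b n 0| = w a b n 0 := by
    rw [d, v_zero, sub_zero, abs_of_nonneg (w_nonneg ha.le hb.le n 0)]
  have hdk : ∀ k, d a b n (k + 1) = w a b n (k + 1) - w a b n k := by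
    intro k; rw [d, v_succ]
  have hmn : m b n ≤ n + 1 := le_trans (m_le_n ha hb hab n) (by omega)
  -- split range (n+1) at m
  have hsum : ∑ k ∈ range (n + 1), |d a b n (k + 1)|
      = (∑ k ∈ range (m b n), |d a b n (k + 1)|)
        + ∑ k ∈ Ico (m b n) (n + 1), |d a b n (k + 1)| := by
    rw [Finset.range_eq_Ico, ← Finset.sum_Ico_consecutive _ (Nat.zero_le _) hmn,
      ← Finset.range_eq_Ico]
  have hup : ∑ k ∈ range (m b n), |d a b n (k + 1)| = w a b n (m b n) - w a b n 0 := by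
    have : ∀ k ∈ range (m b n), |d a b n (k + 1)| = w a b n (k + 1) - w a b n k := by
      intro k hk
      rw [hdk k, abs_of_nonneg (sub_nonneg.mpr (stepA ha hb hab (by
        simpa using Finset.mem_range.mp hk)))]
    rw [Finset.sum_congr rfl this, Finset.sum_range_sub (w a b n)]
  have hdown : ∑ k ∈ Ico (m b n) (n + 1), |d a b n (k + 1)| = w a b n (m b n) := by
    have heq : ∀ k ∈ Ico (m b n) (n + 1), |d a b n (k + 1)| = w a b n k - w a b n (k + 1) := by
      intro k hk
      have hk' := (Finset.mem_Ico.mp hk).1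
      rw [hdk k, abs_of_nonpos (sub_nonpos.mpr (stepB ha hb hab hk')), neg_sub]
    rw [Finset.sum_congr rfl heq, Finset.sum_Ico_eq_sum_range]
    have : ∑ k ∈ range (n + 1 - m b n),
        (w a b n (m b n + k) - w a b n (m b n + k + 1))
        = w a b n (m b n + 0) - w a b n (m b n + (n + 1 - m b n)) := by
      have := Finset.sum_range_sub' (fun j => w a b n (m b n + j)) (n + 1 - m b n)
      simpa [add_assoc] using this
    rw [this, show m b n + (n + 1 - m b n) = n + 1 by omega, add_zero,
      w_of_lt (by omega : n < n + 1), sub_zero]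
  rw [hsplit, hsum, hup, hdown, hd0]
  ring

lemma peak_eq_sum_d (n : ℕ) :
    w a b n (m b n) = ∑ k ∈ range (m b n + 1), d a b n k := by
  have h : ∑ k ∈ range (m b n + 1), d a b n k
      = (∑ k ∈ range (m b n), d a b n (k + 1)) + d a b n 0 :=
    Finset.sum_range_succ' _ (m b n)
  have hd0 : d a b n 0 = w a b n 0 := by rw [d, v_zero, sub_zero]
  have : ∑ k ∈ range (m b n), d a b n (k + 1) = w a b n (m b n) - w a b n 0 := by
    have heq : ∀ k ∈ range (m b n), d a b n (k + 1) = w a b n (k + 1) - w a b n k :=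
      fun k _ => by rw [d, v_succ]
    rw [Finset.sum_congr rfl heq, Finset.sum_range_sub (w a b n)]
  rw [h, this, hd0]; ring

lemma s_succ (n : ℕ) :
    s a b (n + 1) = s a b n - a * b * ∑ k ∈ range (n + 2), (d a b n k) ^ 2 := by
  have hw2 : ∑ k ∈ range (n + 2), (w a b n k) ^ 2 = s a b n := by
    rw [s, Finset.sum_range_succ _ (n+1), w_of_lt (by omega : n < n + 1)]
    simp [s]
  have hv2 : ∑ k ∈ range (n + 2), (v a b n k) ^ 2 = s a b n := by
    rw [Finset.sum_range_succ' (fun k => (v a b n k)^2) (n + 1)]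
    simp only [v_succ, v_zero]
    simp [s]
  have hq : ∑ k ∈ range (n + 2), (d a b n k) ^ 2
      = 2 * s a b n - 2 * ∑ k ∈ range (n + 2), w a b n k * v a b n k := by
    have : ∀ k, (d a b n k) ^ 2
        = (w a b n k)^2 + (v a b n k)^2 - 2 * (w a b n k * v a b n k) := by
      intro k; rw [d]; ring
    rw [Finset.sum_congr rfl (fun k _ => this k)]
    rw [Finset.sum_sub_distrib, Finset.sum_add_distrib, hw2, hv2, ← Finset.mul_sum]
    ring
  have hs1 : s a b (n + 1) = ∑ k ∈ range (n + 2), (a * w a b n k + b * v a b n k) ^ 2 := by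
    rw [s]
    exact Finset.sum_congr rfl fun k _ => by rw [pascal]
  have hexp : ∑ k ∈ range (n + 2), (a * w a b n k + b * v a b n k) ^ 2
      = a^2 * s a b n + b^2 * s a b n
        + 2*a*b * ∑ k ∈ range (n + 2), w a b n k * v a b n k := by
    have : ∀ k, (a * w a b n k + b * v a b n k) ^ 2
        = a^2 * (w a b n k)^2 + b^2 * (v a b n k)^2 + 2*a*b*(w a b n k * v a b n k) := by
      intro k; ring
    rw [Finset.sum_congr rfl (fun k _ => this k), Finset.sum_add_distrib,
      Finset.sum_add_distrib, ← Finset.mul_sum, ← Finset.mul_sum, ← Finset.mul_sum, hw2, hv2]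
  have hab2 : a^2 + b^2 = 1 - 2*a*b := by nlinarith
  rw [hs1, hexp, hq]
  linear_combination (s a b n * (a + b + 1)) * hab

lemma sq_s_le (n : ℕ) :
    (s a b n) ^ 2 ≤ (n + 2 : ℝ) * ∑ k ∈ range (n + 2), (d a b n k) ^ 2 := by
  have h1 : s a b n ≤ w a b n (m b n) := s_le_peak ha hb hab n
  have h0 : 0 ≤ s a b n := Finset.sum_nonneg fun k _ => sq_nonneg _
  have hcs : (w a b n (m b n)) ^ 2 ≤ (m b n + 1 : ℝ) * ∑ k ∈ range (m b n + 1), (d a b n k) ^ 2 := by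
    rw [peak_eq_sum_d ha hb hab]
    have := sq_sum_le_card_mul_sum_sq (s := range (m b n + 1)) (f := d a b n)
    simpa using this
  have hsub : ∑ k ∈ range (m b n + 1), (d a b n k) ^ 2 ≤ ∑ k ∈ range (n + 2), (d a b n k) ^ 2 :=
    Finset.sum_le_sum_of_subset_of_nonneg
      (Finset.range_subset_range.mpr (by have := m_le_n ha hb hab n; omega))
      (fun k _ _ => sq_nonneg _)
  have hm1 : (m b n + 1 : ℝ) ≤ (n + 2 : ℝ) := by
    have := m_le_n ha hb hab n
    have : (m b n : ℝ) ≤ (n : ℝ) := by exact_mod_cast this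
    linarith
  have hdsq : 0 ≤ ∑ k ∈ range (m b n + 1), (d a b n k) ^ 2 :=
    Finset.sum_nonneg fun k _ => sq_nonneg _
  calc (s a b n)^2 ≤ (w a b n (m b n))^2 := by
        have := w_nonneg ha.le hb.le (a := a) (b := b) n (m b n)
        nlinarith
    _ ≤ (m b n + 1 : ℝ) * ∑ k ∈ range (m b n + 1), (d a b n k) ^ 2 := hcs
    _ ≤ (n + 2 : ℝ) * ∑ k ∈ range (n + 2), (d a b n k) ^ 2 := by
        have h2 : 0 ≤ (m b n + 1 : ℝ) := by positivity
        nlinarith [Finset.sum_nonneg (s := range (n+2)) (f := fun k => (d a b n k)^2) (fun k _ => sq_nonneg _)]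

lemma s_nonneg (n : ℕ) : 0 ≤ s a b n := Finset.sum_nonneg fun k _ => sq_nonneg _

lemma s_antitone : Antitone (s a b) := by
  refine antitone_nat_of_succ_le fun n => ?_
  rw [s_succ ha hb hab]
  have h1 : 0 ≤ ∑ k ∈ range (n + 2), (d a b n k) ^ 2 :=
    Finset.sum_nonneg fun k _ => sq_nonneg _
  nlinarith [mul_nonneg (mul_nonneg ha.le hb.le) h1]

lemma s_key (n : ℕ) : s a b (n + 1) ≤ s a b n - a * b * (s a b n) ^ 2 / (n + 2 : ℝ) := by
  rw [s_succ ha hb hab]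
  have h1 := sq_s_le ha hb hab n
  have h2 : (0:ℝ) < (n + 2 : ℝ) := by positivity
  have h3 : a * b * (s a b n) ^ 2 / (n + 2 : ℝ) ≤ a * b * ∑ k ∈ range (n + 2), (d a b n k) ^ 2 := by
    rw [div_le_iff₀ h2]
    have hab0 : 0 ≤ a * b := mul_nonneg ha.le hb.le
    calc a * b * (s a b n) ^ 2 ≤ a * b * ((n + 2 : ℝ) * ∑ k ∈ range (n + 2), (d a b n k) ^ 2) :=
          mul_le_mul_of_nonneg_left h1 hab0
      _ = a * b * (∑ k ∈ range (n + 2), (d a b n k) ^ 2) * (n + 2 : ℝ) := by ring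
  linarith

lemma harmonic2_tendsto : Tendsto (fun n : ℕ => ∑ k ∈ range n, ((k:ℝ)+2)⁻¹) atTop atTop := by
  have h1 : Tendsto (fun n : ℕ => ∑ i ∈ range n, 1 / ((i : ℝ) + 1)) atTop atTop :=
    Real.tendsto_sum_range_one_div_nat_succ_atTop
  have h2 : Tendsto (fun n : ℕ => (2:ℝ)⁻¹ * ∑ i ∈ range n, 1 / ((i : ℝ) + 1)) atTop atTop :=
    h1.const_mul_atTop (by norm_num)
  refine tendsto_atTop_mono (fun n => ?_) h2
  rw [Finset.mul_sum]
  refine Finset.sum_le_sum fun k _ => ?_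
  have hk1 : (0:ℝ) < (k:ℝ) + 1 := by positivity
  have hk2 : (0:ℝ) < (k:ℝ) + 2 := by positivity
  rw [one_div, ← mul_inv, ← one_div, ← one_div]
  apply one_div_le_one_div_of_le hk2
  linarith

lemma s_tendsto : Tendsto (s a b) atTop (nhds 0) := by
  have hex : ∀ ε > (0:ℝ), ∃ N, s a b N < ε := by
    intro ε hε
    by_contra hcon
    push_neg at hcon
    set c := a * b * ε ^ 2 with hc_def
    have hcpos : 0 < c := by positivity
    have hbound : ∀ n, c * ∑ k ∈ range n, ((k:ℝ)+2)⁻¹ ≤ s a b 0 - s a b n := by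
      intro n
      induction n with
      | zero => simp
      | succ i ih =>
        have hkey := s_key ha hb hab i
        have hsi := hcon i
        have h2 : (0:ℝ) < (i:ℝ) + 2 := by positivity
        have hmono : c ≤ a * b * (s a b i) ^ 2 := by rw [hc_def]; nlinarith [mul_pos ha hb, mul_le_mul hsi hsi hε.le (le_trans hε.le hsi)]
        have hd : c / ((i:ℝ)+2) ≤ a * b * (s a b i)^2 / ((i:ℝ)+2) := by gcongr
        have hstep : c / ((i:ℝ)+2) ≤ s a b i - s a b (i + 1) := by
          have : ((i:ℝ) + 2) = ((i:ℕ):ℝ) + 2 := by push_cast; ring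
          push_cast at hkey
          linarith
        rw [Finset.sum_range_succ, mul_add]
        have : c * ((i:ℝ)+2)⁻¹ = c / ((i:ℝ)+2) := by rw [div_eq_mul_inv]
        rw [this]
        linarith
    obtain ⟨N, hN⟩ := ((harmonic2_tendsto ha hb hab).eventually_ge_atTop ((s a b 0 + 1) / c)).exists
    have h1 : c * ((s a b 0 + 1)/c) ≤ c * ∑ k ∈ range N, ((k:ℝ)+2)⁻¹ :=
      mul_le_mul_of_nonneg_left hN hcpos.le
    rw [mul_div_cancel₀ _ (ne_of_gt hcpos)] at h1
    have h2 := hbound N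
    have h3 := hcon N
    linarith
  rw [Metric.tendsto_atTop]
  intro ε hε
  obtain ⟨N, hN⟩ := hex ε hε
  refine ⟨N, fun n hn => ?_⟩
  have h1 : s a b n ≤ s a b N := s_antitone ha hb hab hn
  have h2 : 0 ≤ s a b n := s_nonneg ha hb hab n
  rw [Real.dist_eq, sub_zero, abs_of_nonneg h2]
  linarith

lemma peak_tendsto : Tendsto (fun n => w a b n (m b n)) atTop (nhds 0) := by
  have hle : ∀ n, w a b n (m b n) ≤ Real.sqrt (s a b n) := by
    intro n
    have hw := w_nonneg ha.le hb.le (a := a) (b := b) n (m b n)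
    rw [Real.le_sqrt hw (s_nonneg ha hb hab n)]
    have hmem : m b n ∈ range (n + 1) := Finset.mem_range.mpr (by
      have := m_le_n ha hb hab n; omega)
    exact Finset.single_le_sum (f := fun k => (w a b n k)^2) (fun k _ => sq_nonneg _) hmem
  have hsq : Tendsto (fun n => Real.sqrt (s a b n)) atTop (nhds 0) := by
    have := (Real.continuous_sqrt.tendsto 0).comp (s_tendsto ha hb hab)
    simpa [Function.comp_def] using this
  refine squeeze_zero (fun n => w_nonneg ha.le hb.le n (m b n)) hle hsq

end Steps

variable {E : Type*} [NormedAddCommGroup E] [InnerProductSpace ℝ E] [CompleteSpace E]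
variable {U : E →L[ℝ] E}

lemma norm_U_pow (hU : ∀ x, ‖U x‖ = ‖x‖) (k : ℕ) (x : E) : ‖(U ^ k) x‖ = ‖x‖ := by
  induction k generalizing x with
  | zero => simp
  | succ i ih =>
    rw [pow_succ, ContinuousLinearMap.mul_apply, ih (U x), hU x]

lemma P_apply (z : E) : (a • (1 : E →L[ℝ] E) + b • U) z = a • z + b • U z := by
  simp [ContinuousLinearMap.add_apply, ContinuousLinearMap.smul_apply]

lemma P_pow_norm_le (ha : 0 < a) (hb : 0 < b) (hab : a + b = 1)
    (hU : ∀ x, ‖U x‖ = ‖x‖) (n : ℕ) (x : E) :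
    ‖((a • (1 : E →L[ℝ] E) + b • U) ^ n) x‖ ≤ ‖x‖ := by
  induction n generalizing x with
  | zero => simp
  | succ i ih =>
    rw [pow_succ, ContinuousLinearMap.mul_apply]
    calc ‖((a • (1 : E →L[ℝ] E) + b • U) ^ i) ((a • (1 : E →L[ℝ] E) + b • U) x)‖
        ≤ ‖(a • (1 : E →L[ℝ] E) + b • U) x‖ := ih _
      _ ≤ ‖x‖ := by
          rw [P_apply]
          calc ‖a • x + b • U x‖ ≤ ‖a • x‖ + ‖b • U x‖ := norm_add_le _ _
            _ = a * ‖x‖ + b * ‖x‖ := by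
                rw [norm_smul, norm_smul, hU, Real.norm_eq_abs, Real.norm_eq_abs,
                  abs_of_pos ha, abs_of_pos hb]
            _ = ‖x‖ := by rw [← add_mul, hab, one_mul]

lemma expand (n : ℕ) (z : E) :
    ((a • (1 : E →L[ℝ] E) + b • U) ^ n) z = ∑ k ∈ range (n + 1), w a b n k • ((U ^ k) z) := by
  induction n generalizing z with
  | zero => simp [w_zero_zero]
  | succ i ih =>
    rw [pow_succ, ContinuousLinearMap.mul_apply, ih ((a • (1 : E →L[ℝ] E) + b • U) z)]
    have hstep : ∀ k : ℕ,
        w a b i k • ((U ^ k) ((a • (1 : E →L[ℝ] E) + b • U) z))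
          = (a * w a b i k) • ((U ^ k) z) + (b * w a b i k) • ((U ^ (k + 1)) z) := by
      intro k
      rw [P_apply, _root_.map_add, _root_.map_smul, _root_.map_smul, smul_add, smul_smul, smul_smul,
        mul_comm (w a b i k) a, mul_comm (w a b i k) b]
      congr 1
    rw [Finset.sum_congr rfl fun k _ => hstep k, Finset.sum_add_distrib]
    have h1 : ∑ k ∈ range (i + 1), (a * w a b i k) • ((U ^ k) z)
        = ∑ k ∈ range (i + 2), (a * w a b i k) • ((U ^ k) z) := by
      rw [Finset.sum_range_succ _ (i + 1), w_of_lt (by omega : i < i + 1)]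
      simp
    have h2 : ∑ k ∈ range (i + 1), (b * w a b i k) • ((U ^ (k + 1)) z)
        = ∑ k ∈ range (i + 2), (b * v a b i k) • ((U ^ k) z) := by
      rw [Finset.sum_range_succ' (fun k => (b * v a b i k) • ((U ^ k) z)) (i + 1)]
      simp only [v, Nat.add_sub_cancel]
      simp
    rw [h1, h2, ← Finset.sum_add_distrib]
    refine Finset.sum_congr rfl fun k _ => ?_
    rw [pascal, add_smul]

lemma key_bound (ha : 0 < a) (hb : 0 < b) (hab : a + b = 1)
    (hU : ∀ x, ‖U x‖ = ‖x‖) (n : ℕ) (h : E) :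
    ‖((a • (1 : E →L[ℝ] E) + b • U) ^ n) (h - U h)‖ ≤ 2 * w a b n (m b n) * ‖h‖ := by
  have hexp : ((a • (1 : E →L[ℝ] E) + b • U) ^ n) (h - U h)
      = ∑ k ∈ range (n + 2), d a b n k • ((U ^ k) h) := by
    rw [expand]
    have hterm : ∀ k : ℕ, w a b n k • ((U ^ k) (h - U h))
        = w a b n k • ((U ^ k) h) - w a b n k • ((U ^ (k + 1)) h) := by
      intro k
      rw [_root_.map_sub, smul_sub]
      congr 2
    rw [Finset.sum_congr rfl fun k _ => hterm k, Finset.sum_sub_distrib]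
    have h1 : ∑ k ∈ range (n + 1), w a b n k • ((U ^ k) h)
        = ∑ k ∈ range (n + 2), w a b n k • ((U ^ k) h) := by
      rw [Finset.sum_range_succ _ (n + 1), w_of_lt (by omega : n < n + 1)]
      simp
    have h2 : ∑ k ∈ range (n + 1), w a b n k • ((U ^ (k + 1)) h)
        = ∑ k ∈ range (n + 2), v a b n k • ((U ^ k) h) := by
      rw [Finset.sum_range_succ' (fun k => v a b n k • ((U ^ k) h)) (n + 1)]
      simp only [v, Nat.add_sub_cancel]
      simp
    rw [h1, h2, ← Finset.sum_sub_distrib]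
    refine Finset.sum_congr rfl fun k _ => ?_
    rw [d, sub_smul]
  rw [hexp]
  calc ‖∑ k ∈ range (n + 2), d a b n k • ((U ^ k) h)‖
      ≤ ∑ k ∈ range (n + 2), ‖d a b n k • ((U ^ k) h)‖ := norm_sum_le _ _
    _ = ∑ k ∈ range (n + 2), |d a b n k| * ‖h‖ := by
        refine Finset.sum_congr rfl fun k _ => ?_
        rw [norm_smul, Real.norm_eq_abs, norm_U_pow hU]
    _ = (∑ k ∈ range (n + 2), |d a b n k|) * ‖h‖ := by rw [← Finset.sum_mul]
    _ = 2 * w a b n (m b n) * ‖h‖ := by rw [sum_abs_d ha hb hab]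

/-- Main abstract lemma: weak convergence to 0 on the closure of the range of `1 - U`. -/
lemma tendsto_inner_zero (ha : 0 < a) (hb : 0 < b) (hab : a + b = 1)
    (hU : ∀ x, ‖U x‖ = ‖x‖) {f₀ : E}
    (hf₀ : f₀ ∈ closure ((LinearMap.range ((1 - U : E →L[ℝ] E) : E →ₗ[ℝ] E) : Submodule ℝ E) : Set E))
    (g : E) :
    Tendsto (fun n => (inner ℝ (((a • (1 : E →L[ℝ] E) + b • U) ^ n) f₀) g : ℝ)) atTop (nhds 0) := by
  rw [Metric.tendsto_atTop]
  intro ε hε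
  have hgpos : 0 < ‖g‖ + 1 := by positivity
  obtain ⟨r, hr, hrclose⟩ := Metric.mem_closure_iff.mp hf₀ (ε / (2 * (‖g‖ + 1)))
    (by positivity)
  obtain ⟨h, rfl⟩ := LinearMap.mem_range.mp hr
  have hhp : 0 < ‖h‖ + 1 := by positivity
  have hpeak := peak_tendsto ha hb hab (a := a) (b := b)
  have hev : ∀ᶠ n in atTop, w a b n (m b n) < ε / (4 * (‖h‖ + 1) * (‖g‖ + 1)) := by
    refine (hpeak.eventually (eventually_lt_nhds ?_)).mono fun n hn => hn
    positivity
  obtain ⟨N, hN⟩ := hev.exists_forall_of_atTop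
  refine ⟨N, fun n hn => ?_⟩
  rw [Real.dist_eq, sub_zero]
  set P : E →L[ℝ] E := a • (1 : E →L[ℝ] E) + b • U with hP
  have hsplit : (inner ℝ ((P ^ n) f₀) g : ℝ)
      = inner ℝ ((P ^ n) (f₀ - (1 - U) h)) g + inner ℝ ((P ^ n) ((1 - U) h)) g := by
    rw [← inner_add_left, ← map_add]
    congr 2
    abel
  have hb1 : |(inner ℝ ((P ^ n) (f₀ - (1 - U) h)) g : ℝ)| ≤ ε / (2 * (‖g‖ + 1)) * ‖g‖ := by
    calc |(inner ℝ ((P ^ n) (f₀ - (1 - U) h)) g : ℝ)|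
        ≤ ‖(P ^ n) (f₀ - (1 - U) h)‖ * ‖g‖ := abs_real_inner_le_norm _ _
      _ ≤ ‖f₀ - (1 - U) h‖ * ‖g‖ :=
          mul_le_mul_of_nonneg_right (P_pow_norm_le ha hb hab hU n _) (norm_nonneg _)
      _ ≤ ε / (2 * (‖g‖ + 1)) * ‖g‖ := by
          refine mul_le_mul_of_nonneg_right ?_ (norm_nonneg _)
          rw [← dist_eq_norm]
          exact hrclose.le
  have hone : (1 - U : E →L[ℝ] E) h = h - U h := by
    simp [ContinuousLinearMap.sub_apply]
  have hb2 : |(inner ℝ ((P ^ n) ((1 - U) h)) g : ℝ)|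
      ≤ 2 * w a b n (m b n) * ‖h‖ * ‖g‖ := by
    calc |(inner ℝ ((P ^ n) ((1 - U) h)) g : ℝ)|
        ≤ ‖(P ^ n) ((1 - U) h)‖ * ‖g‖ := abs_real_inner_le_norm _ _
      _ ≤ 2 * w a b n (m b n) * ‖h‖ * ‖g‖ := by
          refine mul_le_mul_of_nonneg_right ?_ (norm_nonneg _)
          rw [hone]
          exact key_bound ha hb hab hU n h
  have hwn := hN n hn
  have hwnn := w_nonneg ha.le hb.le (a := a) (b := b) n (m b n)
  have hg1 : ‖g‖ ≤ ‖g‖ + 1 := by linarith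
  have hg0 : (0:ℝ) ≤ ‖g‖ := norm_nonneg _
  have hh0 : (0:ℝ) ≤ ‖h‖ := norm_nonneg _
  have e1 : ε / (2 * (‖g‖ + 1)) * ‖g‖ < ε / 2 := by
    rw [div_mul_eq_mul_div, div_lt_iff₀ (by positivity)]
    nlinarith
  have e2 : 2 * w a b n (m b n) * ‖h‖ * ‖g‖ < ε / 2 := by
    have hlt : w a b n (m b n) * (4 * (‖h‖ + 1) * (‖g‖ + 1))
        < ε / (4 * (‖h‖ + 1) * (‖g‖ + 1)) * (4 * (‖h‖ + 1) * (‖g‖ + 1)) := by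
      refine mul_lt_mul_of_pos_right hwn (by positivity)
    rw [div_mul_cancel₀ _ (by positivity : (4 * (‖h‖ + 1) * (‖g‖ + 1)) ≠ 0)] at hlt
    nlinarith
  calc |(inner ℝ ((P ^ n) f₀) g : ℝ)|
      ≤ |(inner ℝ ((P ^ n) (f₀ - (1 - U) h)) g : ℝ)| + |(inner ℝ ((P ^ n) ((1 - U) h)) g : ℝ)| := by
        rw [hsplit]; exact abs_add_le _ _
    _ < ε := by linarith


end CCAux

/-- if `U` is the Koopman operator of an ergodic, weakly mixing
measure-preserving transformation `T` and `0 < a < 1`, then the powers of the Markov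
operator `P = a I + (1-a) U` converge to `Θ` (the projection onto constants) in the weak
operator topology: `⟨P^n f, g⟩ → (∫ f)(∫ g)`.  Weak mixing is expressed by the Cesàro
convergence `(1/N) ∑_{n<N} |⟨U^n f, g⟩ - (∫ f)(∫ g)| → 0`. -/
theorem convex_combination_powers_tendsto_proj
    {X : Type*} [MeasurableSpace X] (μ : Measure X) [IsProbabilityMeasure μ]
    (T : X ≃ X) (hT : MeasurePreserving T μ μ) (hTsymm : MeasurePreserving T.symm μ μ)
    (hErg : Ergodic ⇑T μ)
    (U : Lp ℝ 2 μ →L[ℝ] Lp ℝ 2 μ)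
    (hU : ∀ f : Lp ℝ 2 μ, (U f : X → ℝ) =ᵐ[μ] fun x => f (T.symm x))
    (hwm : ∀ f g : Lp ℝ 2 μ,
      Tendsto (fun N : ℕ => (N : ℝ)⁻¹ * ∑ n ∈ Finset.range N,
          |(inner ℝ ((U ^ n) f) g : ℝ) - (∫ x, f x ∂μ) * ∫ x, g x ∂μ|) atTop (nhds 0))
    (a : ℝ) (ha0 : 0 < a) (ha1 : a < 1) :
    ∀ f g : Lp ℝ 2 μ,
      Tendsto (fun n =>
          (inner ℝ (((a • (1 : Lp ℝ 2 μ →L[ℝ] Lp ℝ 2 μ) + (1 - a) • U) ^ n) f) g : ℝ))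
        atTop (nhds ((∫ x, f x ∂μ) * ∫ x, g x ∂μ)) := by
  intro f g
  have hb : 0 < 1 - a := by linarith
  have hab : a + (1 - a) = 1 := by ring
  -- U is an isometry
  have hUiso : ∀ x : Lp ℝ 2 μ, ‖U x‖ = ‖x‖ := by
    intro x
    rw [Lp.norm_def, Lp.norm_def]
    congr 1
    rw [eLpNorm_congr_ae (hU x)]
    exact eLpNorm_comp_measurePreserving (Lp.aestronglyMeasurable x) hTsymm
  -- the constant function 1
  set one : Lp ℝ 2 μ := Lp.const 2 μ (1 : ℝ) with hone_def
  have hone_coe : (one : X → ℝ) =ᵐ[μ] fun _ => (1:ℝ) := Lp.coeFn_const 2 μ (1:ℝ)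
  -- inner ℝ products against `one` are integrals
  have hinner_one : ∀ y : Lp ℝ 2 μ, (inner ℝ one y : ℝ) = ∫ x, y x ∂μ := by
    intro y
    rw [L2.inner_def]
    refine integral_congr_ae ?_
    filter_upwards [hone_coe] with x hx
    rw [RCLike.inner_apply, conj_trivial, hx, mul_one]
  -- U fixes constants
  have hUone : U one = one := by
    apply Lp.ext
    have h1 : (fun x => (one : X → ℝ) (T.symm x)) =ᵐ[μ] fun _ => (1:ℝ) :=
      MeasureTheory.ae_eq_comp (f := ⇑T.symm) (g := (one : X → ℝ))
        (g' := fun _ => (1:ℝ)) hTsymm.measurable.aemeasurable (by rwa [hTsymm.map_eq])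
    exact ((hU one).trans h1).trans hone_coe.symm
  -- P fixes constants
  set P : Lp ℝ 2 μ →L[ℝ] Lp ℝ 2 μ := a • (1 : Lp ℝ 2 μ →L[ℝ] Lp ℝ 2 μ) + (1 - a) • U
    with hP_def
  have hPone : P one = one := by
    rw [hP_def]
    simp only [ContinuousLinearMap.add_apply, ContinuousLinearMap.smul_apply,
      ContinuousLinearMap.one_apply, hUone]
    rw [← add_smul, hab, one_smul]
  have hPnone : ∀ n : ℕ, (P ^ n) one = one := by
    intro n
    induction n with
    | zero => simp
    | succ i ih => rw [pow_succ, ContinuousLinearMap.mul_apply, hPone, ih]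
  -- f₀ : the mean-zero part of f
  set c : ℝ := ∫ x, f x ∂μ with hc_def
  set f₀ : Lp ℝ 2 μ := f - c • one with hf₀_def
  have hint_one : ∫ x, (one : X → ℝ) x ∂μ = 1 := by
    rw [integral_congr_ae hone_coe]
    simp
  have hint_f₀ : ∫ x, (f₀ : X → ℝ) x ∂μ = 0 := by
    have hcoe : (f₀ : X → ℝ) =ᵐ[μ] fun x => f x - c * (one : X → ℝ) x := by
      filter_upwards [Lp.coeFn_sub f (c • one), Lp.coeFn_smul c one] with x h1 h2
      rw [hf₀_def, h1]
      simp [h2]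
    rw [integral_congr_ae hcoe, integral_sub ((Lp.memLp f).integrable one_le_two)
      (((Lp.memLp one).integrable one_le_two).const_mul c), integral_const_mul,
      hint_one, mul_one, ← hc_def, sub_self]
  -- measurable equivalence induced by T
  set Te : X ≃ᵐ X :=
    { toEquiv := T
      measurable_toFun := hT.measurable
      measurable_invFun := hTsymm.measurable } with hTe_def
  have hTsE : MeasurePreserving ⇑Te.symm μ μ := hTsymm
  -- f₀ is in the closure of the range of 1 - U
  have hf₀mem : f₀ ∈ closure
      ((LinearMap.range ((1 - U : Lp ℝ 2 μ →L[ℝ] Lp ℝ 2 μ) : Lp ℝ 2 μ →ₗ[ℝ] Lp ℝ 2 μ) : Submodule ℝ (Lp ℝ 2 μ)) :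
        Set (Lp ℝ 2 μ)) := by
    rw [← Submodule.topologicalClosure_coe, ← Submodule.orthogonal_orthogonal_eq_closure,
      SetLike.mem_coe, Submodule.mem_orthogonal]
    intro y hy
    have hy' : ∀ h : Lp ℝ 2 μ, (inner ℝ (h - U h) y : ℝ) = 0 := by
      intro h
      refine (Submodule.mem_orthogonal _ y).mp hy _ (LinearMap.mem_range.mpr ⟨h, ?_⟩)
      simp [ContinuousLinearMap.sub_apply]
    have hinv : ∀ h : Lp ℝ 2 μ, (inner ℝ (U h) y : ℝ) = inner ℝ h y := by
      intro h
      have := hy' h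
      rw [inner_sub_left] at this
      linarith
    -- y ∘ T as an element of L2
    have hyae := Lp.aestronglyMeasurable y
    have hyT_m : AEStronglyMeasurable (fun x => y (T x)) μ :=
      hyae.comp_quasiMeasurePreserving hT.quasiMeasurePreserving
    have hyT_lp : MemLp (fun x => y (T x)) 2 μ := by
      refine ⟨hyT_m, ?_⟩
      rw [show (fun x => (y : X → ℝ) (T x)) = (y : X → ℝ) ∘ ⇑T from rfl,
        eLpNorm_comp_measurePreserving hyae hT]
      exact Lp.eLpNorm_lt_top y
    set yT : Lp ℝ 2 μ := hyT_lp.toLp _ with hyT_def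
    have hchange : ∀ h : Lp ℝ 2 μ, (inner ℝ (U h) y : ℝ) = ∫ x, h x * y (T x) ∂μ := by
      intro h
      rw [L2.inner_def]
      have hae : (fun x => (inner ℝ ((U h : X → ℝ) x) ((y : X → ℝ) x) : ℝ))
          =ᵐ[μ] fun x => h (T.symm x) * y x := by
        filter_upwards [hU h] with x hx
        rw [RCLike.inner_apply, conj_trivial, hx, mul_comm]
      rw [integral_congr_ae hae]
      have hpt : (fun x => (h : X → ℝ) (T.symm x) * (y : X → ℝ) x)
          = fun x => (fun z => (h : X → ℝ) z * (y : X → ℝ) (T z)) (Te.symm x) := by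
        funext x
        show _ = (h : X → ℝ) (T.symm x) * (y : X → ℝ) (T (T.symm x))
        rw [Equiv.apply_symm_apply]
      rw [hpt]
      exact hTsE.integral_comp' (fun z => (h : X → ℝ) z * (y : X → ℝ) (T z))
    have hyyT : ∀ h : Lp ℝ 2 μ, (inner ℝ h y : ℝ) = inner ℝ h yT := by
      intro h
      rw [← hinv h, hchange h, L2.inner_def]
      refine (integral_congr_ae ?_).symm
      filter_upwards [hyT_lp.coeFn_toLp] with x hx
      rw [RCLike.inner_apply, conj_trivial, hx, mul_comm]
    have hy_eq : y = yT := ext_inner_left ℝ fun v => (hyyT v)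
    have hinvar : (y : X → ℝ) ∘ ⇑T =ᵐ[μ] (y : X → ℝ) := by
      have h1 : (y : X → ℝ) =ᵐ[μ] (yT : X → ℝ) := by rw [← hy_eq]
      exact ((h1.trans hyT_lp.coeFn_toLp) : (y : X → ℝ) =ᵐ[μ] fun x => y (T x)).symm
    obtain ⟨cy, hcy⟩ := hErg.ae_eq_const_of_ae_eq_comp_ae hyae hinvar
    rw [L2.inner_def]
    have hae2 : (fun x => (inner ℝ ((y : X → ℝ) x) ((f₀ : X → ℝ) x) : ℝ))
        =ᵐ[μ] fun x => cy * (f₀ : X → ℝ) x := by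
      filter_upwards [hcy] with x hx
      rw [RCLike.inner_apply, conj_trivial, hx]
      exact mul_comm _ _
    rw [integral_congr_ae hae2, integral_const_mul, hint_f₀, mul_zero]
  -- main convergence
  have hmain := CCAux.tendsto_inner_zero ha0 hb hab hUiso hf₀mem g
  have hdecomp : ∀ n : ℕ, (inner ℝ ((P ^ n) f) g : ℝ)
      = inner ℝ ((P ^ n) f₀) g + c * ∫ x, g x ∂μ := by
    intro n
    have hfd : f = f₀ + c • one := by rw [hf₀_def]; abel
    calc (inner ℝ ((P ^ n) f) g : ℝ)
        = inner ℝ ((P ^ n) (f₀ + c • one)) g := by rw [← hfd]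
      _ = inner ℝ ((P ^ n) f₀ + c • ((P ^ n) one)) g := by rw [map_add, (P ^ n).map_smul]
      _ = inner ℝ ((P ^ n) f₀) g + c * (inner ℝ one g : ℝ) := by
          rw [hPnone n, inner_add_left, real_inner_smul_left]
      _ = inner ℝ ((P ^ n) f₀) g + c * ∫ x, g x ∂μ := by
          rw [hinner_one g]
  have hfinal := hmain.add (tendsto_const_nhds (x := c * ∫ x, g x ∂μ))
  rw [zero_add] at hfinal
  refine Tendsto.congr (fun n => (hdecomp n).symm) ?_
  rw [hc_def] at hfinal
  exact hfinal
end

section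
/- Let T be a weakly mixing invertible measure-preserving transformation with Koopman operator U, and suppose ν is an ergodic self-joining of T that is invariant under T^m × Id for some m ≠ 0. If T^m is ergodic, then ν = μ × μ. -/
open MeasureTheory Filter

private lemma measurable_perm_pow {X : Type*} [MeasurableSpace X] (T : X ≃ X)
    (h1 : Measurable T) : ∀ n : ℕ, Measurable ⇑(T ^ n) := by
  intro n
  induction n with
  | zero => simpa using measurable_id
  | succ n ih =>
      rw [pow_succ]
      have : ⇑(T ^ n * T) = ⇑(T ^ n) ∘ ⇑T := rfl
      rw [this]
      exact ih.comp h1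

private lemma measurable_perm_zpow {X : Type*} [MeasurableSpace X] (T : X ≃ X)
    (h1 : Measurable T) (h2 : Measurable T.symm) (m : ℤ) : Measurable ⇑(T ^ m) := by
  cases m with
  | ofNat n => rw [Int.ofNat_eq_coe, zpow_natCast]; exact measurable_perm_pow T h1 n
  | negSucc n =>
      rw [zpow_negSucc, ← inv_pow]
      have hinv : (T⁻¹ : Equiv.Perm X) = T.symm := rfl
      have := measurable_perm_pow (T.symm) h2 (n + 1)
      rw [← hinv] at this
      exact this

/-- If `T` is a weakly mixing invertible measure-preserving transformation,
`ν` is an ergodic self-joining of `T` which is invariant under `T^m × Id` for some `m ≠ 0`,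
and `T^m` is ergodic, then `ν = μ × μ`. -/
theorem ergodic_selfJoining_invariant_under_power_prod_id_eq_prod
    {X : Type*} [MeasurableSpace X] (μ : Measure X) [IsProbabilityMeasure μ]
    (T : X ≃ X) (hT : MeasurePreserving T μ μ) (hTsymm : MeasurePreserving T.symm μ μ)
    (hwm : Ergodic (Prod.map ⇑T ⇑T) (μ.prod μ))   -- weak mixing of `T`
    (m : ℤ) (hm : m ≠ 0) (hErg : Ergodic ⇑(T ^ m) μ)
    (ν : Measure (X × X)) [IsProbabilityMeasure ν]
    (hνinv : Measure.map (Prod.map ⇑T ⇑T) ν = ν)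
    (hνfst : ν.fst = μ) (hνsnd : ν.snd = μ)
    (hνerg : Ergodic (Prod.map ⇑T ⇑T) ν)
    (hminv : Measure.map (Prod.map ⇑(T ^ m) id) ν = ν) :
    ν = μ.prod μ := by
  have hfm : Measurable ⇑(T ^ m) := measurable_perm_zpow T hT.measurable hTsymm.measurable m
  have hfsymm : Measurable ⇑(T ^ m).symm := by
    have h1 : (T ^ m).symm = T ^ (-m) := by
      have : (T ^ m).symm = (T ^ m)⁻¹ := rfl
      rw [this, ← zpow_neg]
    rw [h1]
    exact measurable_perm_zpow T hT.measurable hTsymm.measurable (-m)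
  let E : X ≃ᵐ X := ⟨T ^ m, hfm, hfsymm⟩
  have hE : MeasurableEmbedding ⇑(T ^ m) := E.measurableEmbedding
  symm
  refine Measure.prod_eq fun A B hA hB => ?_
  -- the fibered measure `ρ A' = ν (A' ×ˢ B)`
  set S : Set (X × X) := Prod.snd ⁻¹' B with hSdef
  have hSm : MeasurableSet S := measurable_snd hB
  set ρ : Measure X := Measure.map Prod.fst (ν.restrict S) with hρdef
  have hρ_apply : ∀ A' : Set X, MeasurableSet A' → ρ A' = ν (A' ×ˢ B) := by
    intro A' hA'
    rw [hρdef, Measure.map_apply measurable_fst hA',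
      Measure.restrict_apply (measurable_fst hA')]
    rfl
  have hle : ρ ≤ ν.fst := by
    rw [hρdef, Measure.fst]
    exact Measure.map_mono Measure.restrict_le_self measurable_fst
  have hleμ : ρ ≤ μ := hνfst ▸ hle
  have hρμ : ρ ≪ μ := Measure.absolutelyContinuous_of_le hleμ
  have : IsFiniteMeasure ρ := isFiniteMeasure_of_le μ hleμ
  -- invariance of `ρ` under `T ^ m`
  have hg : Measurable (Prod.map ⇑(T ^ m) (id : X → X)) := hfm.prodMap measurable_id
  have hρinv : Measure.map ⇑(T ^ m) ρ = ρ := by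
    rw [hρdef, Measure.map_map hfm measurable_fst]
    have hcomp : ⇑(T ^ m) ∘ Prod.fst = Prod.fst ∘ (Prod.map ⇑(T ^ m) (id : X → X)) := rfl
    rw [hcomp, ← Measure.map_map measurable_fst hg]
    congr 1
    have hpre : (Prod.map ⇑(T ^ m) (id : X → X)) ⁻¹' S = S := rfl
    calc Measure.map (Prod.map ⇑(T ^ m) id) (ν.restrict S)
        = Measure.map (Prod.map ⇑(T ^ m) id)
            (ν.restrict ((Prod.map ⇑(T ^ m) (id : X → X)) ⁻¹' S)) := by rw [hpre]
      _ = (Measure.map (Prod.map ⇑(T ^ m) id) ν).restrict S := (Measure.restrict_map hg hSm).symm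
      _ = ν.restrict S := by rw [hminv]
  -- the Radon–Nikodym derivative is invariant, hence a.e. constant
  have hrn : (fun x => ρ.rnDeriv μ ((T ^ m) x)) =ᵐ[μ] ρ.rnDeriv μ := by
    have := hE.rnDeriv_map ρ μ
    rwa [hErg.toMeasurePreserving.map_eq, hρinv] at this
  obtain ⟨c, hc⟩ := hErg.ae_eq_const_of_ae_eq_comp₀
    (Measure.measurable_rnDeriv ρ μ).nullMeasurable hrn
  have hρeq : ρ = c • μ := by
    have h1 : μ.withDensity (ρ.rnDeriv μ) = ρ := Measure.withDensity_rnDeriv_eq ρ μ hρμ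
    rw [← h1, withDensity_congr_ae hc]; exact withDensity_const c
  -- identify the constant
  have hcuniv : ρ Set.univ = c := by
    rw [hρeq]; simp
  have hρuniv : ρ Set.univ = μ B := by
    rw [hρ_apply Set.univ MeasurableSet.univ, ← hνsnd, Measure.snd_apply hB]
    congr 1
    ext ⟨x, y⟩
    simp
  have hcB : c = μ B := by rw [← hcuniv, hρuniv]
  have := hρ_apply A hA
  rw [hρeq, hcB] at this
  simp only [Measure.smul_apply, smul_eq_mul] at this
  rw [← this, mul_comm]
end
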